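/- Let (p_i)_{i∈ℕ} be a monotonically decreasing sequence of reals with 0 < p_i < 1 for all i, which is summable with Σ := ∑_{i=1}^{∞} p_i < 1. Then for every n ∈ ℕ and every nonempty subset A ⊆ {1,…,n}: ∑_{i∈A} p_i · ∏_{j∈{1,…,n}, j≠i} (1 − p_j) ≥ |A| · p_n · (1 − Σ). -/

import Mathlib

lemma weier (f : ℕ → ℝ) : ∀ s : Finset ℕ, (∀ i ∈ s, 0 ≤ f i ∧ f i ≤ 1) →
    1 - ∑ i ∈ s, f i ≤ ∏ i ∈ s, (1 - f i) := by
  intro s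
  induction s using Finset.induction_on with
  | empty => simp
  | @insert a s' hx ih =>
    intro h
    rw [Finset.sum_insert hx, Finset.prod_insert hx]
    have ha := h a (Finset.mem_insert_self a s')
    have hs : ∀ i ∈ s', 0 ≤ f i ∧ f i ≤ 1 := fun i hi => h i (Finset.mem_insert_of_mem hi)
    have hsum : 0 ≤ ∑ i ∈ s', f i := Finset.sum_nonneg fun i hi => (hs i hi).1
    have := ih hs
    nlinarith [this, ha.1, ha.2, hsum]

/-- Probability bound behind Theorem 4.5: for a monotonically decreasing summable
sequence of mutation probabilities with `Σ = ∑_{i=1}^∞ p_i < 1`, for every `n ≥ 1`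
and every nonempty `A ⊆ {1,…,n}`, the probability that exactly one bit, at a
position in `A`, flips is at least `|A|·p_n·(1 − Σ)`. -/
theorem stmt13 (p : ℕ → ℝ)
    (hp : ∀ i : ℕ, 1 ≤ i → 0 < p i ∧ p i < 1)
    (hmono : ∀ i : ℕ, 1 ≤ i → p (i + 1) ≤ p i)
    (hsum : Summable (fun i : ℕ => p (i + 1)))
    (hSigma : (∑' i : ℕ, p (i + 1)) < 1) :
    ∀ n : ℕ, 1 ≤ n → ∀ A : Finset ℕ, A ⊆ Finset.Icc 1 n → A.Nonempty →
      (A.card : ℝ) * p n * (1 - ∑' i : ℕ, p (i + 1)) ≤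
        ∑ i ∈ A, p i * ∏ j ∈ (Finset.Icc 1 n).erase i, (1 - p j) := by
  intro n hn A hA hAne
  set S := ∑' i : ℕ, p (i + 1) with hS
  -- monotonicity: p j ≤ p i for 1 ≤ i ≤ j
  have hmono' : ∀ i j : ℕ, 1 ≤ i → i ≤ j → p j ≤ p i := by
    intro i j hi hij
    induction j with
    | zero => omega
    | succ k ih =>
      rcases Nat.lt_or_ge i (k+1) with h | h
      · have hk : 1 ≤ k := by omega
        exact le_trans (hmono k hk) (ih (by omega))
      · have : i = k + 1 := by omega
        subst this; exact le_refl _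
  -- sum over any subset of Icc 1 n is ≤ S
  have hsumle : ∀ s : Finset ℕ, s ⊆ Finset.Icc 1 n → ∑ j ∈ s, p j ≤ S := by
    intro s hs
    have hinj : Set.InjOn (· - 1) s := by
      intro a ha b hb hab
      have ha1 : 1 ≤ a := (Finset.mem_Icc.mp (hs ha)).1
      have hb1 : 1 ≤ b := (Finset.mem_Icc.mp (hs hb)).1
      simp only at hab; omega
    have : ∑ j ∈ s, p j = ∑ i ∈ s.image (· - 1), p (i + 1) := by
      rw [Finset.sum_image (fun a ha b hb => hinj ha hb)]
      apply Finset.sum_congr rfl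
      intro j hj
      have : 1 ≤ j := (Finset.mem_Icc.mp (hs hj)).1
      congr 1; omega
    rw [this]
    exact Summable.sum_le_tsum _ (fun i _ => le_of_lt (hp (i+1) (by omega)).1) hsum 
  -- termwise bound
  have key : ∀ i ∈ A, p n * (1 - S) ≤ p i * ∏ j ∈ (Finset.Icc 1 n).erase i, (1 - p j) := by
    intro i hi
    obtain ⟨hi1, hin⟩ := Finset.mem_Icc.mp (hA hi)
    have hpi : p n ≤ p i := hmono' i n hi1 hin
    have hprod : 1 - S ≤ ∏ j ∈ (Finset.Icc 1 n).erase i, (1 - p j) := by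
      refine le_trans ?_ (weier p _ ?_)
      · have := hsumle ((Finset.Icc 1 n).erase i) (Finset.erase_subset _ _)
        linarith
      · intro j hj
        have hj' := Finset.mem_Icc.mp (Finset.mem_of_mem_erase hj)
        exact ⟨le_of_lt (hp j hj'.1).1, le_of_lt (hp j hj'.1).2⟩
    have hpn : 0 < p n := (hp n hn).1
    have h1S : 0 ≤ 1 - S := by linarith
    calc p n * (1 - S) ≤ p i * (1 - S) := by nlinarith
      _ ≤ p i * ∏ j ∈ (Finset.Icc 1 n).erase i, (1 - p j) := by
          have := (hp i hi1).1; nlinarith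
  calc (A.card : ℝ) * p n * (1 - S) = ∑ _i ∈ A, p n * (1 - S) := by
        rw [Finset.sum_const, nsmul_eq_mul]; ring
    _ ≤ ∑ i ∈ A, p i * ∏ j ∈ (Finset.Icc 1 n).erase i, (1 - p j) :=
        Finset.sum_le_sum key
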